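/- The converse of the weight-equality property fails: there exist a propositional formula φ and two distinct variables a, b of φ such that IW_φ(a) = IW_φ(b) but a and b do not have equivalent logical influence (¬(a ≡ b)). -/

import Mathlib

/-- Propositional formulas over a set `V` of variables, built from variables,
the constants ⊤ (`tru`) and ⊥ (`fls`), negation, conjunction and disjunction. -/
inductive PropForm (V : Type) : Type where
  | tru : PropForm V
  | fls : PropForm V
  | var : V → PropForm V
  | neg : PropForm V → PropForm V
  | conj : PropForm V → PropForm V → PropForm V
  | disj : PropForm V → PropForm V → PropForm V
  deriving DecidableEq

/-- The three-valued truth domain B₃ = {⊤, ⊥, ?}. -/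
inductive B3 : Type where
  | top : B3
  | bot : B3
  | unk : B3
  deriving DecidableEq

instance : Fintype B3 :=
  ⟨{B3.top, B3.bot, B3.unk}, fun x => by cases x <;> simp⟩

namespace PropForm

variable {V : Type} [DecidableEq V]

/-- Simplifying negation: ¬⊤ = ⊥, ¬⊥ = ⊤. -/
def sneg : PropForm V → PropForm V
  | tru => fls
  | fls => tru
  | φ => neg φ

/-- Simplifying conjunction: ⊤∧ψ = ψ, ⊥∧ψ = ⊥ (and symmetrically). -/
def sconj : PropForm V → PropForm V → PropForm V
  | tru, ψ => ψ
  | fls, _ => fls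
  | φ, tru => φ
  | _, fls => fls
  | φ, ψ => conj φ ψ

/-- Simplifying disjunction: ⊤∨ψ = ⊤, ⊥∨ψ = ψ (and symmetrically). -/
def sdisj : PropForm V → PropForm V → PropForm V
  | tru, _ => tru
  | fls, ψ => ψ
  | _, tru => tru
  | φ, fls => φ
  | φ, ψ => disj φ ψ

/-- `prog(φ, σ)`: substitute the definite truth values (⊤ or ⊥) assigned by the
three-valued assignment `σ` and apply the standard Boolean simplification rules,
leaving variables with value ? untouched. -/
def progAssign (σ : V → B3) : PropForm V → PropForm V
  | tru => tru
  | fls => fls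
  | var v =>
      match σ v with
      | B3.top => tru
      | B3.bot => fls
      | B3.unk => var v
  | neg φ => sneg (progAssign σ φ)
  | conj φ ψ => sconj (progAssign σ φ) (progAssign σ ψ)
  | disj φ ψ => sdisj (progAssign σ φ) (progAssign σ ψ)

/-- `prog(φ, a = v)` for a definite truth value `v` (`true` = ⊤, `false` = ⊥):
the simplification under the assignment setting `a` to `v` and all other
variables to ?. -/
def progVar (φ : PropForm V) (a : V) (v : Bool) : PropForm V :=
  progAssign (fun x => if x = a then (if v then B3.top else B3.bot) else B3.unk) φ

/-- `rename(ψ, a, b)`: replace every occurrence of the variable `a` by `b`. -/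
def rename : PropForm V → V → V → PropForm V
  | tru, _, _ => tru
  | fls, _, _ => fls
  | var v, a, b => var (if v = a then b else v)
  | neg φ, a, b => neg (rename φ a b)
  | conj φ ψ, a, b => conj (rename φ a b) (rename ψ a b)
  | disj φ ψ, a, b => disj (rename φ a b) (rename ψ a b)

/-- The set of variables occurring in a formula. -/
def vars : PropForm V → Finset V
  | tru => ∅
  | fls => ∅
  | var v => {v}
  | neg φ => vars φ
  | conj φ ψ => vars φ ∪ vars ψ
  | disj φ ψ => vars φ ∪ vars ψ

/-- `a ≡ b`: the variables `a` and `b` have equivalent logical influence on the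
outcome of `φ`, i.e. `prog(φ, a = ⊥) = rename(prog(φ, b = ⊥), a, b)` and
`prog(φ, a = ⊤) = rename(prog(φ, b = ⊤), a, b)` (syntactic equality). -/
def EquivInfluence (φ : PropForm V) (a b : V) : Prop :=
  progVar φ a false = rename (progVar φ b false) a b ∧
  progVar φ a true = rename (progVar φ b true) a b

/-- The influence weight `IW_φ(a) = f_a / C_{a = ?}`, where `C_{a = ?}` is the
number of three-valued assignments `σ` with `σ a = ?` and `f_a` is the number of
such assignments for which `a` occurs in `prog(φ, σ)`. -/
noncomputable def IW [Fintype V] (φ : PropForm V) (a : V) : ℚ :=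
  (Fintype.card {σ : V → B3 // σ a = B3.unk ∧ a ∈ vars (progAssign σ φ)} : ℚ) /
  (Fintype.card {σ : V → B3 // σ a = B3.unk} : ℚ)

end PropForm

open PropForm in
/-- The converse of the weight-equality property fails: there are a formula φ and
two distinct variables a, b with IW_φ(a) = IW_φ(b) but ¬(a ≡ b). -/
theorem converse_of_weight_equality_fails :
    ∃ (n : ℕ) (φ : PropForm (Fin n)) (a b : Fin n),
      a ≠ b ∧ IW φ a = IW φ b ∧ ¬ EquivInfluence φ a b := by
  refine ⟨2, disj (var 0) (neg (var 1)), 0, 1, by decide, ?_, by simp only [EquivInfluence]; decide⟩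
  unfold IW
  have h1 : Fintype.card {σ : Fin 2 → B3 // σ 0 = B3.unk ∧
      (0 : Fin 2) ∈ vars (progAssign σ (disj (var 0) (neg (var 1))))} = 2 := by decide
  have h2 : Fintype.card {σ : Fin 2 → B3 // σ 1 = B3.unk ∧
      (1 : Fin 2) ∈ vars (progAssign σ (disj (var 0) (neg (var 1))))} = 2 := by decide
  have h3 : Fintype.card {σ : Fin 2 → B3 // σ 0 = B3.unk} = 3 := by decide
  have h4 : Fintype.card {σ : Fin 2 → B3 // σ 1 = B3.unk} = 3 := by decide
  rw [h1, h2, h3, h4]
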